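/- The monomial ideal L(λ) is a lexicographic ideal: for every integer j ≥ 0 and every pair of monomials u, v ∈ R of degree j, if u ∈ L(λ) and v is greater than u in the lexicographic order on monomials determined by x_0 > x_1 > ⋯ > x_m, then v ∈ L(λ). -/

import Mathlib

open MvPolynomial

noncomputable section

/-- `a_j`: the number of parts of the partition `l 1 ≥ l 2 ≥ ⋯ ≥ l r` equal to `j`. -/
def partCount (r : ℕ) (l : ℕ → ℕ) (j : ℕ) : ℕ :=
  ((Finset.Icc 1 r).filter fun i => l i = j).card

open Fin.NatCast in
/-- The generators of the lexicographic ideal `L(λ)`. -/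
def lexGens (k : Type*) [Field k] (m r : ℕ) (l : ℕ → ℕ) :
    Set (MvPolynomial (Fin (m + 1)) k) :=
  { f | ∃ kk : ℕ, kk + 2 ≤ m ∧
      f = (∏ t ∈ Finset.range kk, X ((t : ℕ) : Fin (m + 1)) ^ partCount r l (m - t)) *
            X ((kk : ℕ) : Fin (m + 1)) ^ (partCount r l (m - kk) + 1) }
  ∪ { (∏ t ∈ Finset.range (m - 1), X ((t : ℕ) : Fin (m + 1)) ^ partCount r l (m - t)) *
        X (((m - 1 : ℕ)) : Fin (m + 1)) ^ partCount r l 1 }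

/-- The lexicographic ideal `L(λ)` associated to the partition `λ`. -/
def lexIdeal (k : Type*) [Field k] (m r : ℕ) (l : ℕ → ℕ) :
    Ideal (MvPolynomial (Fin (m + 1)) k) :=
  Ideal.span (lexGens k m r l)

/-- The exponent vector `c` is lexicographically greater than `b` (with `x_0 > x_1 > ⋯ > x_m`):
the first nonzero entry of `c − b` is positive. -/
def LexGreater {m : ℕ} (c b : Fin (m + 1) →₀ ℕ) : Prop :=
  ∃ t : Fin (m + 1), (∀ s : Fin (m + 1), s < t → c s = b s) ∧ b t < c t

open Fin.NatCast

namespace LexAux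

/-- Exponent vectors of the generators. -/
def genExps (m r : ℕ) (l : ℕ → ℕ) : Set (Fin (m + 1) →₀ ℕ) :=
  { d | ∃ kk : ℕ, kk + 2 ≤ m ∧
      d = (∑ t ∈ Finset.range kk,
            Finsupp.single ((t : ℕ) : Fin (m + 1)) (partCount r l (m - t))) +
            Finsupp.single ((kk : ℕ) : Fin (m + 1)) (partCount r l (m - kk) + 1) }
  ∪ { (∑ t ∈ Finset.range (m - 1),
        Finsupp.single ((t : ℕ) : Fin (m + 1)) (partCount r l (m - t))) +
        Finsupp.single (((m - 1 : ℕ)) : Fin (m + 1)) (partCount r l 1) }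

lemma sum_single_apply (m K : ℕ) (hK : K ≤ m + 1) (n : ℕ → ℕ) (s : Fin (m + 1)) :
    (∑ t ∈ Finset.range K, Finsupp.single ((t : ℕ) : Fin (m + 1)) (n t)) s
      = if s.val < K then n s.val else 0 := by
  rw [Finsupp.finset_sum_apply]
  by_cases h : s.val < K
  · rw [if_pos h, Finset.sum_eq_single s.val]
    · simp [Finsupp.single_apply, Fin.cast_val_eq_self]
    · intro t ht hne
      rw [Finsupp.single_apply, if_neg]
      intro hc
      apply hne
      have hv : ((t : Fin (m + 1)) : ℕ) = t :=
        Fin.val_cast_of_lt (lt_of_lt_of_le (Finset.mem_range.mp ht) hK)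
      rw [← hv, hc]
    · intro hns; exact absurd (Finset.mem_range.mpr h) hns
  · rw [if_neg h]
    apply Finset.sum_eq_zero
    intro t ht
    rw [Finsupp.single_apply, if_neg]
    intro hc
    apply h
    have hv : ((t : Fin (m + 1)) : ℕ) = t :=
      Fin.val_cast_of_lt (lt_of_lt_of_le (Finset.mem_range.mp ht) hK)
    rw [← hc, hv]
    exact Finset.mem_range.mp ht

lemma prod_X_pow_monomial {k : Type*} [Field k] (m K : ℕ) (n : ℕ → ℕ) :
    (∏ t ∈ Finset.range K, (X ((t : ℕ) : Fin (m + 1)) : MvPolynomial (Fin (m + 1)) k) ^ n t)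
      = monomial (∑ t ∈ Finset.range K, Finsupp.single ((t : ℕ) : Fin (m + 1)) (n t)) 1 := by
  induction K with
  | zero => simp
  | succ K ih =>
    rw [Finset.prod_range_succ, Finset.sum_range_succ, ih, X_pow_eq_monomial, monomial_mul,
      one_mul]

lemma lexGens_eq {k : Type*} [Field k] (m r : ℕ) (l : ℕ → ℕ) :
    lexGens k m r l = (fun d => monomial d (1 : k)) '' genExps m r l := by
  have key : ∀ K p : ℕ,
      (∏ t ∈ Finset.range K,
          (X ((t : ℕ) : Fin (m + 1)) : MvPolynomial (Fin (m + 1)) k) ^ partCount r l (m - t)) *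
        X ((K : ℕ) : Fin (m + 1)) ^ p
      = monomial ((∑ t ∈ Finset.range K,
          Finsupp.single ((t : ℕ) : Fin (m + 1)) (partCount r l (m - t))) +
          Finsupp.single ((K : ℕ) : Fin (m + 1)) p) 1 := by
    intro K p
    rw [prod_X_pow_monomial, X_pow_eq_monomial, monomial_mul, one_mul]
  ext f
  simp only [lexGens, genExps, Set.image_union, Set.mem_union, Set.mem_image,
    Set.mem_setOf_eq, Set.mem_singleton_iff, Set.image_singleton]
  constructor
  · rintro (⟨kk, hkk, rfl⟩ | rfl)
    · exact Or.inl ⟨_, ⟨kk, hkk, rfl⟩, (key kk _).symm⟩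
    · exact Or.inr (key (m - 1) _)
  · rintro (h | rfl)
    · obtain ⟨x, hx, rfl⟩ := h
      obtain ⟨kk, hkk, rfl⟩ := hx
      exact Or.inl ⟨kk, hkk, (key kk _).symm⟩
    · exact Or.inr (key (m - 1) _).symm

lemma mem_lexIdeal_iff {k : Type*} [Field k] (m r : ℕ) (l : ℕ → ℕ) (c : Fin (m + 1) →₀ ℕ) :
    monomial c (1 : k) ∈ lexIdeal k m r l ↔ ∃ d ∈ genExps m r l, d ≤ c := by
  rw [lexIdeal, lexGens_eq, mem_ideal_span_monomial_image]
  classical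
  rw [support_monomial, if_neg (one_ne_zero (α := k))]
  simp

lemma sum_add_single_le_iff (m K p : ℕ) (hK : K < m + 1) (n : ℕ → ℕ) (c : Fin (m + 1) →₀ ℕ) :
    (∑ t ∈ Finset.range K, Finsupp.single ((t : ℕ) : Fin (m + 1)) (n t)) +
        Finsupp.single ((K : ℕ) : Fin (m + 1)) p ≤ c ↔
      (∀ t, t < K → n t ≤ c ((t : ℕ) : Fin (m + 1))) ∧ p ≤ c ((K : ℕ) : Fin (m + 1)) := by
  have hKv : (((K : ℕ) : Fin (m + 1)) : ℕ) = K := Fin.val_cast_of_lt hK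
  rw [Finsupp.le_def]
  constructor
  · intro h
    constructor
    · intro t ht
      have htv : (((t : ℕ) : Fin (m + 1)) : ℕ) = t := Fin.val_cast_of_lt (by omega)
      have h2 := h ((t : ℕ) : Fin (m + 1))
      rw [Finsupp.add_apply, sum_single_apply m K (by omega) n, htv, if_pos ht] at h2
      exact le_trans (Nat.le_add_right _ _) h2
    · have h2 := h ((K : ℕ) : Fin (m + 1))
      rw [Finsupp.add_apply, sum_single_apply m K (by omega) n, hKv, if_neg (lt_irrefl K),
        Finsupp.single_apply, if_pos rfl, zero_add] at h2
      exact h2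
  · rintro ⟨h1, h2⟩ s
    rw [Finsupp.add_apply, sum_single_apply m K (by omega) n, Finsupp.single_apply]
    by_cases hs : s.val < K
    · have hne : ¬((K : ℕ) : Fin (m + 1)) = s := by
        intro hc; rw [← hc, hKv] at hs; exact lt_irrefl K hs
      rw [if_pos hs, if_neg hne, add_zero]
      have := h1 s.val hs
      rwa [Fin.cast_val_eq_self] at this
    · rw [if_neg hs, zero_add]
      by_cases hsK : ((K : ℕ) : Fin (m + 1)) = s
      · rw [if_pos hsK, ← hsK]; exact h2
      · rw [if_neg hsK]; exact Nat.zero_le _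

lemma genExps_le_iff (m r : ℕ) (hm : 1 ≤ m) (l : ℕ → ℕ) (c : Fin (m + 1) →₀ ℕ) :
    (∃ d ∈ genExps m r l, d ≤ c) ↔
      ((∃ K, K + 2 ≤ m ∧
          (∀ t, t < K → partCount r l (m - t) ≤ c ((t : ℕ) : Fin (m + 1))) ∧
          partCount r l (m - K) + 1 ≤ c ((K : ℕ) : Fin (m + 1))) ∨
        (∀ t, t < m → partCount r l (m - t) ≤ c ((t : ℕ) : Fin (m + 1)))) := by
  constructor
  · rintro ⟨d, (⟨kk, hkk, rfl⟩ | rfl), hle⟩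
    · rw [sum_add_single_le_iff m kk _ (by omega)] at hle
      exact Or.inl ⟨kk, hkk, hle.1, hle.2⟩
    · rw [sum_add_single_le_iff m (m - 1) _ (by omega)] at hle
      refine Or.inr fun t ht => ?_
      by_cases h : t < m - 1
      · exact hle.1 t h
      · have : t = m - 1 := by omega
        subst this
        have h1 : m - (m - 1) = 1 := by omega
        rw [h1]
        exact hle.2
  · rintro (⟨K, hK, h1, h2⟩ | hall)
    · refine ⟨_, Or.inl ⟨K, hK, rfl⟩, ?_⟩
      rw [sum_add_single_le_iff m K _ (by omega)]
      exact ⟨h1, h2⟩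
    · refine ⟨_, Or.inr rfl, ?_⟩
      rw [sum_add_single_le_iff m (m - 1) _ (by omega)]
      refine ⟨fun t ht => hall t (by omega), ?_⟩
      have h1 : m - (m - 1) = 1 := by omega
      have := hall (m - 1) (by omega)
      rwa [h1] at this

lemma key_comb (m : ℕ) (α B C : ℕ → ℕ) (t0 : ℕ) (ht0 : t0 ≤ m)
    (heq : ∀ s, s < t0 → C s = B s) (hlt : B t0 < C t0)
    (hP : (∃ K, K + 2 ≤ m ∧ (∀ t, t < K → α t ≤ B t) ∧ α K + 1 ≤ B K) ∨
      (∀ t, t < m → α t ≤ B t)) :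
    (∃ K, K + 2 ≤ m ∧ (∀ t, t < K → α t ≤ C t) ∧ α K + 1 ≤ C K) ∨
      (∀ t, t < m → α t ≤ C t) := by
  classical
  -- Step 1: P(B) → Q(B)
  have QB : (∃ K, K < m ∧ (∀ t, t < K → B t = α t) ∧ α K < B K) ∨ (∀ t, t < m → B t = α t) := by
    by_cases hall : ∀ t, t < m → B t = α t
    · exact Or.inr hall
    · push_neg at hall
      obtain ⟨t1, ht1m, ht1⟩ := hall
      have hex : ∃ t, B t ≠ α t := ⟨t1, ht1⟩
      have ht2 : B (Nat.find hex) ≠ α (Nat.find hex) := Nat.find_spec hex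
      have ht2min : ∀ s, s < Nat.find hex → B s = α s := fun s hs =>
        not_not.mp (Nat.find_min hex hs)
      rcases hP with ⟨K, hK2, hKle, hKgt⟩ | hall2
      · have hBK : B K ≠ α K := by omega
        have htK : Nat.find hex ≤ K := Nat.find_min' hex hBK
        have hle : α (Nat.find hex) ≤ B (Nat.find hex) := by
          rcases lt_or_eq_of_le htK with h | h
          · exact hKle _ h
          · rw [h]; omega
        exact Or.inl ⟨Nat.find hex, by omega, ht2min, lt_of_le_of_ne hle (Ne.symm ht2)⟩
      · have htK : Nat.find hex ≤ t1 := Nat.find_min' hex ht1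
        have hle : α (Nat.find hex) ≤ B (Nat.find hex) := hall2 _ (by omega)
        exact Or.inl ⟨Nat.find hex, by omega, ht2min, lt_of_le_of_ne hle (Ne.symm ht2)⟩
  -- Step 2: Q(B) → Q(C) using the lex relation
  have QC : (∃ K, K < m ∧ (∀ t, t < K → C t = α t) ∧ α K < C K) ∨ (∀ t, t < m → C t = α t) := by
    rcases QB with ⟨K, hKm, hKeq, hKlt⟩ | hall
    · by_cases h : t0 < K
      · refine Or.inl ⟨t0, by omega, fun s hs => (heq s hs).trans (hKeq s (by omega)), ?_⟩
        have := hKeq t0 h; omega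
      · refine Or.inl ⟨K, hKm, fun s hs => (heq s (by omega)).trans (hKeq s hs), ?_⟩
        by_cases hK0 : K = t0
        · subst hK0; omega
        · have : C K = B K := heq K (by omega); omega
    · by_cases h : t0 < m
      · refine Or.inl ⟨t0, h, fun s hs => (heq s hs).trans (hall s (by omega)), ?_⟩
        have := hall t0 h; omega
      · exact Or.inr fun t ht => (heq t (by omega)).trans (hall t ht)
  -- Step 3: Q(C) → P(C)
  rcases QC with ⟨K, hKm, hKeq, hKlt⟩ | hall
  · by_cases h : K + 2 ≤ m
    · exact Or.inl ⟨K, h, fun t ht => le_of_eq (hKeq t ht).symm, hKlt⟩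
    · refine Or.inr fun t ht => ?_
      by_cases htK : t < K
      · exact le_of_eq (hKeq t htK).symm
      · have : t = K := by omega
        subst this; omega
  · exact Or.inr fun t ht => le_of_eq (hall t ht).symm

end LexAux

/-- The monomial ideal `L(λ)` is a lexicographic ideal: for every degree `j`
and every pair of monomials `u, v` of degree `j`, if `u ∈ L(λ)` and `v > u` in the
lexicographic order, then `v ∈ L(λ)`. -/
theorem lexIdeal_isLex (k : Type*) [Field k] (m r : ℕ)
    (hm : 1 ≤ m) (hr : 1 ≤ r) (l : ℕ → ℕ)
    (hanti : AntitoneOn l (Set.Icc 1 r)) (hpos : ∀ i ∈ Set.Icc 1 r, 1 ≤ l i)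
    (hle : l 1 ≤ m) :
    ∀ (j : ℕ) (b c : Fin (m + 1) →₀ ℕ),
      (b.sum fun _ e => e) = j → (c.sum fun _ e => e) = j →
      monomial b (1 : k) ∈ lexIdeal k m r l → LexGreater c b →
      monomial c (1 : k) ∈ lexIdeal k m r l := by
  intro j b c hbj hcj hmem hlex
  rw [LexAux.mem_lexIdeal_iff, LexAux.genExps_le_iff m r hm l] at hmem ⊢
  obtain ⟨t0, heq, hlt⟩ := hlex
  have heq' : ∀ s, s < t0.val → c ((s : ℕ) : Fin (m + 1)) = b ((s : ℕ) : Fin (m + 1)) := by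
    intro s hs
    exact heq _ (by rw [Fin.lt_def, Fin.val_cast_of_lt (by omega)]; exact hs)
  have hlt' : b ((t0.val : ℕ) : Fin (m + 1)) < c ((t0.val : ℕ) : Fin (m + 1)) := by
    rwa [Fin.cast_val_eq_self]
  exact LexAux.key_comb m (fun t => partCount r l (m - t))
    (fun t => b ((t : ℕ) : Fin (m + 1))) (fun t => c ((t : ℕ) : Fin (m + 1)))
    t0.val (by omega) heq' hlt' hmem

end
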